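/- Let 0 < f_j ≤ f_l, B > 0, P > 0, and let 0 < x ≤ x' ≤ B. Then for all y_l ≥ 0 and y_j ≥ 0 with y_l·x + y_j·(B − x) ≤ P, there exist y'_l ≥ 0 and y'_j ≥ 0 with y'_l·x' + y'_j·(B − x') ≤ P such that x·log(1 + y_l·f_l) + (B − x)·log(1 + y_j·f_j) ≤ x'·log(1 + y'_l·f_l) + (B − x')·log(1 + y'_j·f_j). In particular, the optimal value of the two-group power allocation problem is nondecreasing in the loading x assigned to the stronger group. -/

import Mathlib

/-- In the two-group fractional loading problem with
f_l ≥ f_j > 0, combined loading B and power budget P, the optimal combined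
sum rate is nondecreasing in the loading x assigned to the stronger group:
any feasible rate at loading x is dominated by a feasible rate at loading
x' ≥ x. -/
theorem twoGroup_rate_monotone_in_loading (fj fl B P x x' : ℝ)
    (hfj : 0 < fj) (hfl : fj ≤ fl) (hB : 0 < B) (hP : 0 < P)
    (hx : 0 < x) (hxx' : x ≤ x') (hx'B : x' ≤ B)
    (yl yj : ℝ) (hyl : 0 ≤ yl) (hyj : 0 ≤ yj)
    (hpow : yl * x + yj * (B - x) ≤ P) :
    ∃ yl' yj' : ℝ, 0 ≤ yl' ∧ 0 ≤ yj' ∧ yl' * x' + yj' * (B - x') ≤ P ∧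
      x * Real.log (1 + yl * fl) + (B - x) * Real.log (1 + yj * fj) ≤
        x' * Real.log (1 + yl' * fl) + (B - x') * Real.log (1 + yj' * fj) := by
  have hx' : 0 < x' := lt_of_lt_of_le hx hxx'
  have hfl0 : 0 < fl := lt_of_lt_of_le hfj hfl
  set yl' : ℝ := (yl * x + yj * (x' - x)) / x' with hyl'def
  refine ⟨yl', yj, ?_, hyj, ?_, ?_⟩
  · apply div_nonneg _ hx'.le
    have := mul_nonneg hyj (sub_nonneg.mpr hxx')
    nlinarith [mul_nonneg hyl hx.le]
  · have : yl' * x' = yl * x + yj * (x' - x) := by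
      rw [hyl'def, div_mul_cancel₀ _ hx'.ne']
    linarith [hpow]
  · -- key inequality
    have hA : (0:ℝ) < 1 + yl * fl := by nlinarith [mul_nonneg hyl hfl0.le]
    have hBj : (0:ℝ) < 1 + yj * fj := by nlinarith [mul_nonneg hyj hfj.le]
    have hBl : (0:ℝ) < 1 + yj * fl := by nlinarith [mul_nonneg hyj hfl0.le]
    -- step 1: log (1 + yj fj) ≤ log (1 + yj fl)
    have hlog1 : Real.log (1 + yj * fj) ≤ Real.log (1 + yj * fl) :=
      Real.log_le_log hBj (by nlinarith)
    -- step 2: concavity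
    have hconc := strictConcaveOn_log_Ioi.concaveOn.2 (Set.mem_Ioi.mpr hA)
      (Set.mem_Ioi.mpr hBl)
      (div_nonneg hx.le hx'.le)
      (div_nonneg (sub_nonneg.mpr hxx') hx'.le)
      (by field_simp; ring)
    have hcomb : (x / x') • (1 + yl * fl) + ((x' - x) / x') • (1 + yj * fl)
        = 1 + yl' * fl := by
      simp only [smul_eq_mul, hyl'def]
      field_simp
      ring
    rw [hcomb] at hconc
    simp only [smul_eq_mul] at hconc
    -- multiply by x' > 0
    have hconc' : x * Real.log (1 + yl * fl) + (x' - x) * Real.log (1 + yj * fl)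
        ≤ x' * Real.log (1 + yl' * fl) := by
      have := mul_le_mul_of_nonneg_left hconc hx'.le
      have hne : x' ≠ 0 := ne_of_gt hx'
      field_simp at this
      rw [mul_comm fl yj, mul_comm fl yl'] at this
      nlinarith [this]
    have h2 : (x' - x) * Real.log (1 + yj * fj) ≤ (x' - x) * Real.log (1 + yj * fl) :=
      mul_le_mul_of_nonneg_left hlog1 (sub_nonneg.mpr hxx')
    nlinarith [hconc', h2]
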